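/- Let p, q be integers with 2 ≤ p < q, let γ > γ_{p,q}, and let ε > 0. If u = (u_n)_{n∈ℤ} is a complex-valued sequence in ℓ²(ℤ) satisfying ε(u_{n+1} − 2u_n + u_{n−1}) − u_n + |u_n|^{p−1}u_n − γ|u_n|^{q−1}u_n = 0 for all n ∈ ℤ, then u_n = 0 for all n ∈ ℤ. -/

import Mathlib

lemma key_rpow (a b t : ℝ) (ha : 1 ≤ a) (hab : a < b) (ht : 0 ≤ t) :
    t ^ a ≤ 1 + (a / b * ((b - a) / b) ^ ((b - a) / a)) * t ^ b := by
  have ha0 : 0 < a := lt_of_lt_of_le one_pos ha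
  have hb0 : 0 < b := lt_trans ha0 hab
  have hba : 0 < b - a := sub_pos.2 hab
  set x : ℝ := (b - a) / b with hx
  have hx0 : 0 < x := div_pos hba hb0
  have hc0 : 0 ≤ x ^ ((b - a) / a) := (Real.rpow_pos_of_pos hx0 _).le
  rcases eq_or_lt_of_le ht with h0 | ht
  · rw [← h0, Real.zero_rpow (ne_of_gt ha0), Real.zero_rpow (ne_of_gt hb0)]
    nlinarith [mul_nonneg (div_nonneg ha0.le hb0.le) hc0]
  · have hw : a / b + x = 1 := by
      rw [hx]; field_simp; ring
    have htb : (0:ℝ) < t ^ b := Real.rpow_pos_of_pos ht _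
    have hp₁ : (0:ℝ) ≤ x ^ ((b - a) / a) * t ^ b := mul_nonneg hc0 htb.le
    have H := Real.geom_mean_le_arith_mean2_weighted
      (div_nonneg ha0.le hb0.le) hx0.le hp₁ (inv_nonneg.2 hx0.le) hw
    have hL : (x ^ ((b - a) / a) * t ^ b) ^ (a / b) * x⁻¹ ^ x = t ^ a := by
      rw [Real.mul_rpow hc0 htb.le, ← Real.rpow_mul hx0.le, ← Real.rpow_mul ht.le,
        ← Real.rpow_neg_one x, ← Real.rpow_mul hx0.le, mul_right_comm,
        ← Real.rpow_add hx0]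
      have e1 : (b - a) / a * (a / b) + -1 * x = 0 := by
        rw [hx]; field_simp; ring
      have e2 : b * (a / b) = a := by field_simp
      rw [e1, e2, Real.rpow_zero, one_mul]
    have hR : a / b * (x ^ ((b - a) / a) * t ^ b) + x * x⁻¹ =
        1 + (a / b * x ^ ((b - a) / a)) * t ^ b := by
      rw [mul_inv_cancel₀ (ne_of_gt hx0)]; ring
    rw [hL, hR] at H
    exact H


/-- The critical parameter `γ_{p,q} = ((p−1)/(q−1))·((q−p)/(q−1))^{(q−p)/(p−1)}`. -/
noncomputable def gammaCrit (p q : ℕ) : ℝ :=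
  (((p : ℝ) - 1) / ((q : ℝ) - 1)) *
    (((q : ℝ) - (p : ℝ)) / ((q : ℝ) - 1)) ^ (((q : ℝ) - (p : ℝ)) / ((p : ℝ) - 1))

lemma key_nat (p q : ℕ) (hp : 2 ≤ p) (hpq : p < q) (t : ℝ) (ht : 0 ≤ t) :
    t ^ (p - 1) ≤ 1 + gammaCrit p q * t ^ (q - 1) := by
  have ha : (1:ℝ) ≤ (p:ℝ) - 1 := by
    have : (2:ℝ) ≤ (p:ℝ) := by exact_mod_cast hp
    linarith
  have hab : (p:ℝ) - 1 < (q:ℝ) - 1 := by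
    have : (p:ℝ) < (q:ℝ) := by exact_mod_cast hpq
    linarith
  have H := key_rpow ((p:ℝ) - 1) ((q:ℝ) - 1) t ha hab ht
  have hcp : ((p - 1 : ℕ) : ℝ) = (p:ℝ) - 1 := by
    have : 1 ≤ p := by omega
    push_cast [this]; ring
  have hcq : ((q - 1 : ℕ) : ℝ) = (q:ℝ) - 1 := by
    have : 1 ≤ q := by omega
    push_cast [this]; ring
  have e1 : t ^ (p - 1 : ℕ) = t ^ ((p:ℝ) - 1) := by
    rw [← Real.rpow_natCast t (p - 1), hcp]
  have e2 : t ^ (q - 1 : ℕ) = t ^ ((q:ℝ) - 1) := by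
    rw [← Real.rpow_natCast t (q - 1), hcq]
  have e3 : gammaCrit p q =
      ((p:ℝ) - 1) / ((q:ℝ) - 1) *
        ((((q:ℝ) - 1) - ((p:ℝ) - 1)) / ((q:ℝ) - 1)) ^
          ((((q:ℝ) - 1) - ((p:ℝ) - 1)) / ((p:ℝ) - 1)) := by
    unfold gammaCrit; ring_nf
  rw [e1, e2, e3]
  convert H using 4 <;> ring


/-- For `2 ≤ p < q`, `γ > γ_{p,q}` and `ε > 0`, the only ℓ²(ℤ) solution of the
stationary DNLS equation
`ε(u_{n+1} − 2u_n + u_{n−1}) − u_n + |u_n|^{p−1}u_n − γ|u_n|^{q−1}u_n = 0`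
is the zero sequence. -/
theorem only_zero_solution_of_gamma_gt_crit (p q : ℕ) (hp : 2 ≤ p) (hpq : p < q)
    (γ : ℝ) (hγ : gammaCrit p q < γ) (ε : ℝ) (hε : 0 < ε)
    (u : ℤ → ℂ) (hl2 : Summable fun n : ℤ => ‖u n‖ ^ 2)
    (heq : ∀ n : ℤ,
      (ε : ℂ) * (u (n + 1) - 2 * u n + u (n - 1)) - u n
        + (‖u n‖ : ℂ) ^ (p - 1) * u n - (γ : ℂ) * (‖u n‖ : ℂ) ^ (q - 1) * u n = 0) :
    ∀ n : ℤ, u n = 0 := by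
  by_contra hne
  push_neg at hne
  obtain ⟨n₀, hn₀⟩ := hne
  have hfpos : 0 < ‖u n₀‖ := norm_pos_iff.2 hn₀
  -- ‖u n‖ → 0 along cofinite
  have htend2 : Filter.Tendsto (fun n : ℤ => ‖u n‖ ^ 2) Filter.cofinite (nhds 0) :=
    hl2.tendsto_cofinite_zero
  have htend : Filter.Tendsto (fun n : ℤ => ‖u n‖) Filter.cofinite (nhds 0) := by
    have := (Real.continuous_sqrt.tendsto 0).comp htend2
    simp only [Function.comp_def, Real.sqrt_zero] at this
    convert this using 2 with n
    rw [Real.sqrt_sq (norm_nonneg _)]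
  have hev : ∀ᶠ n in Filter.cofinite, ‖u n‖ < ‖u n₀‖ :=
    htend.eventually_lt_const hfpos
  have hfin : {n : ℤ | ¬ ‖u n‖ < ‖u n₀‖}.Finite := by
    rwa [Filter.eventually_cofinite] at hev
  have hne' : hfin.toFinset.Nonempty := ⟨n₀, by simp⟩
  obtain ⟨m, hm, hmax⟩ := hfin.toFinset.exists_max_image (fun n => ‖u n‖) hne'
  have hM₀ : ‖u n₀‖ ≤ ‖u m‖ := hmax n₀ (by simp)
  set M := ‖u m‖ with hMdef
  have hMpos : 0 < M := lt_of_lt_of_le hfpos hM₀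
  have hall : ∀ n : ℤ, ‖u n‖ ≤ M := by
    intro n
    by_cases h : n ∈ hfin.toFinset
    · exact hmax n h
    · simp only [Set.Finite.mem_toFinset, Set.mem_setOf_eq, not_not] at h
      exact le_trans h.le hM₀
  -- rearrange the equation at m
  set c : ℝ := 2 * ε + 1 - M ^ (p - 1) + γ * M ^ (q - 1) with hcdef
  have hre : (ε : ℂ) * (u (m + 1) + u (m - 1)) = (c : ℂ) * u m := by
    have h := heq m
    push_cast [hcdef]
    linear_combination h
  -- c > 2ε via the key inequality
  have hkey : M ^ (p - 1) < 1 + γ * M ^ (q - 1) := by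
    have h1 := key_nat p q hp hpq M hMpos.le
    have h2 : gammaCrit p q * M ^ (q - 1) < γ * M ^ (q - 1) :=
      mul_lt_mul_of_pos_right hγ (pow_pos hMpos _)
    linarith
  have hc : 2 * ε < c := by rw [hcdef]; linarith
  -- take norms
  have hnorm : c * M ≤ ε * (2 * M) := by
    have h1 : ‖(ε : ℂ) * (u (m + 1) + u (m - 1))‖ = ‖(c : ℂ) * u m‖ := by rw [hre]
    rw [norm_mul, norm_mul, Complex.norm_real, Complex.norm_real,
      Real.norm_of_nonneg hε.le, Real.norm_of_nonneg (by linarith)] at h1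
    have h2 : ‖u (m + 1) + u (m - 1)‖ ≤ 2 * M := by
      calc ‖u (m + 1) + u (m - 1)‖ ≤ ‖u (m + 1)‖ + ‖u (m - 1)‖ := norm_add_le _ _
        _ ≤ M + M := add_le_add (hall _) (hall _)
        _ = 2 * M := by ring
    calc c * M = ε * ‖u (m + 1) + u (m - 1)‖ := h1.symm
      _ ≤ ε * (2 * M) := by nlinarith
  nlinarith
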